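/- For any four pairwise disjoint subsets A, B, {i}, {i+1} of [n] (with i, i+1 ∉ A ∪ B), the ψ-operators satisfy the skein operator identity ψ_{A∪{i+1}} ∘ ψ_{B∪{i}} + ψ_{A∪{i}} ∘ ψ_{B∪{i+1}} + ψ_{A∪B} ∘ ψ_{{i,i+1}} − ψ_A ∘ ψ_{B∪{i,i+1}} − ψ_{A∪{i,i+1}} ∘ ψ_B = 0 as linear operators on Λ{Θ_n,Ξ_n}. -/

import Mathlib

open Finset

/-- The index set for the `2n` fermionic generators `θ₁,…,θₙ,ξ₁,…,ξₙ`: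
`Sum.inl i` is `θ_i`, `Sum.inr i` is `ξ_i`. -/
abbrev Gen (n : ℕ) := Fin n ⊕ Fin n

/-- The position of a generator in the fixed order `θ₁ < ⋯ < θₙ < ξ₁ < ⋯ < ξₙ`. -/
def gidx {n : ℕ} : Gen n → ℕ
  | .inl i => (i : ℕ)
  | .inr i => n + (i : ℕ)

/-- The exterior algebra `∧{Θ_n, Ξ_n}` over `ℂ`, modeled by coefficient functions
on the basis of monomials `θ_S · ξ_T`, a monomial being indexed by a subset of the
`2n` generators. -/
abbrev ExtA (n : ℕ) := Finset (Gen n) → ℂ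

/-- The basis monomial indexed by a set of generators (product taken in the fixed order). -/
noncomputable def emon {n : ℕ} (S : Finset (Gen n)) : ExtA n := fun T => if T = S then 1 else 0

/-- The generator `θ_i`. -/
noncomputable def theta {n : ℕ} (i : Fin n) : ExtA n := emon {Sum.inl i}

/-- The generator `ξ_i`. -/
noncomputable def xi {n : ℕ} (i : Fin n) : ExtA n := emon {Sum.inr i}

/-- The sign `(-1)^{#inversions}` obtained when concatenating the sorted monomial on `S`
with the sorted monomial on `T` and re-sorting. -/
noncomputable def msign {n : ℕ} (S T : Finset (Gen n)) : ℂ :=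
  (-1 : ℂ) ^ (((S ×ˢ T).filter (fun p => gidx p.2 < gidx p.1)).card)

/-- Multiplication in the exterior algebra `∧{Θ_n, Ξ_n}`. -/
noncomputable def emul {n : ℕ} (f g : ExtA n) : ExtA n :=
  fun U => ∑ S ∈ U.powerset, msign S (U \ S) * f S * g (U \ S)

/-- The inner product on `∧{Θ_n, Ξ_n}` making the monomials `θ_S · ξ_T` orthonormal. -/
noncomputable def einner {n : ℕ} (f g : ExtA n) : ℂ :=
  ∑ S : Finset (Gen n), f S * g S

/-- The contraction (exterior differentiation) action `f ⊙ h`: on generators,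
`ω_i ⊙ (ω_{j_1} ⋯ ω_{j_r})` removes `ω_i` with the sign `(-1)^{s-1}` if `j_s = i`
and gives `0` otherwise, extended bilinearly (on a monomial `ω_S`, it is the
composite of the single contractions). -/
noncomputable def odot {n : ℕ} (f h : ExtA n) : ExtA n :=
  fun T => ∑ S : Finset (Gen n), if Disjoint S T then msign S T * f S * h (S ∪ T) else 0

/-- The sign produced when the permutation `w` reorders the (sorted) monomial on `S`. -/
noncomputable def actsign {n : ℕ} (w : Equiv.Perm (Fin n)) (S : Finset (Gen n)) : ℂ :=
  (-1 : ℂ) ^ (((S ×ˢ S).filter (fun p =>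
      gidx p.1 < gidx p.2 ∧
        gidx (Equiv.sumCongr w w p.2) < gidx (Equiv.sumCongr w w p.1))).card)

/-- The diagonal action of a permutation `w ∈ S_n` on `∧{Θ_n, Ξ_n}`:
`w · θ_i = θ_{w(i)}`, `w · ξ_i = ξ_{w(i)}`, extended as an algebra automorphism. -/
noncomputable def pact {n : ℕ} (w : Equiv.Perm (Fin n)) (f : ExtA n) : ExtA n :=
  fun T =>
    actsign w (T.map (Equiv.sumCongr w w).symm.toEmbedding) *
      f (T.map (Equiv.sumCongr w w).symm.toEmbedding)

/-- The block operator `ρ_B`: for `|B| > 1`, `ρ_B(f) = ∑_{i ≠ j ∈ B} ξ_i · (θ_j ⊙ f)`;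
for `B = {i}`, `ρ_B(f) = ξ_i · (θ_i ⊙ f)`. -/
noncomputable def rho {n : ℕ} (B : Finset (Fin n)) (f : ExtA n) : ExtA n :=
  if 1 < B.card then
    ∑ i ∈ B, ∑ j ∈ B.erase i, emul (xi i) (odot (theta j) f)
  else
    ∑ i ∈ B, emul (xi i) (odot (theta i) f)

/-- The operator `ψ_B`, equal to `ρ_B` when `|B| > 1` and `0` when `|B| ≤ 1`. -/
noncomputable def psi {n : ℕ} (B : Finset (Fin n)) (f : ExtA n) : ExtA n :=
  if 1 < B.card then rho B f else 0

/-- The two-set operator `ψ_{A,B}(f) = ∑_{a ∈ A, b ∈ B} [ξ_a·(θ_b ⊙ f) + ξ_b·(θ_a ⊙ f)]`. -/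
noncomputable def psiPair {n : ℕ} (A B : Finset (Fin n)) (f : ExtA n) : ExtA n :=
  ∑ a ∈ A, ∑ b ∈ B, (emul (xi a) (odot (theta b) f) + emul (xi b) (odot (theta a) f))

/-- A set partition of `[n]` is noncrossing if whenever `a < b < c < d` with `a,c` in a
block `B` and `b,d` in a block `C`, then `B = C`. -/
def Noncrossing {n : ℕ} (π : Finpartition (Finset.univ : Finset (Fin n))) : Prop :=
  ∀ B ∈ π.parts, ∀ C ∈ π.parts, ∀ a b c d : Fin n,
    a < b → b < c → c < d → a ∈ B → c ∈ B → b ∈ C → d ∈ C → B = C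

/-- The composite operator `ρ_π = ρ_{B_1} ∘ ⋯ ∘ ρ_{B_k}` over the blocks of `π`
(the order of composition is immaterial since block operators commute). -/
noncomputable def rhoPartition {n : ℕ} (π : Finpartition (Finset.univ : Finset (Fin n))) :
    ExtA n → ExtA n :=
  π.parts.toList.foldr (fun B g => rho B ∘ g) id

/-- The top monomial `θ_1 θ_2 ⋯ θ_n`. -/
noncomputable def topTheta (n : ℕ) : ExtA n :=
  emon ((Finset.univ : Finset (Fin n)).image Sum.inl)

/-- The fermion `F_π := ρ_π(θ_1 θ_2 ⋯ θ_n)` attached to a set partition `π` of `[n]`. -/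
noncomputable def Fperm {n : ℕ} (π : Finpartition (Finset.univ : Finset (Fin n))) : ExtA n :=
  rhoPartition π (topTheta n)

/-- The fermion `f_π := (ξ_1 + ⋯ + ξ_n) ⊙ F_π`. -/
noncomputable def fperm {n : ℕ} (π : Finpartition (Finset.univ : Finset (Fin n))) : ExtA n :=
  odot (∑ i : Fin n, xi i) (Fperm π)

variable {n : ℕ}

lemma gidx_inj : Function.Injective (gidx (n := n)) := by
  rintro (a | a) (b | b) h <;> simp [gidx] at h <;>
    first
    | (exact congrArg Sum.inl (Fin.ext h))
    | (exact congrArg Sum.inr (Fin.ext h))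
    | (exact absurd h (by omega))
    | (exact absurd h (by omega : ¬ _))
    | (exact absurd h.symm (by omega : ¬ _))

lemma msign_singleton (x : Gen n) (T : Finset (Gen n)) :
    msign {x} T = (-1 : ℂ) ^ ((T.filter (fun t => gidx t < gidx x)).card) := by
  unfold msign
  congr 1
  rw [Finset.singleton_product, Finset.filter_map, Finset.card_map]
  rfl

lemma msign_singleton_insert (x y : Gen n) (T : Finset (Gen n)) (hy : y ∉ T) :
    msign {x} (insert y T) =
      (if gidx y < gidx x then -1 else 1) * msign {x} T := by
  rw [msign_singleton, msign_singleton, Finset.filter_insert]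
  split_ifs with h
  · rw [Finset.card_insert_of_notMem (by simp [hy]), pow_succ, mul_comm]
  · rw [one_mul]

lemma odot_theta_apply (b : Fin n) (g : ExtA n) (T : Finset (Gen n)) :
    odot (theta b) g T =
      if Sum.inl b ∈ T then 0
      else msign {Sum.inl b} T * g (insert (Sum.inl b) T) := by
  unfold odot
  rw [Finset.sum_eq_single ({Sum.inl b} : Finset (Gen n))]
  · by_cases h : Sum.inl b ∈ T <;>
      simp [h, theta, emon, Finset.disjoint_singleton_left, Finset.insert_eq, - Finset.singleton_union]
  · intro S _ hS
    have : theta b S = 0 := by simp [theta, emon, hS]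
    simp [this]
  · intro h; exact absurd (Finset.mem_univ _) h

lemma emul_xi_apply (a : Fin n) (g : ExtA n) (U : Finset (Gen n)) :
    emul (xi a) g U =
      if Sum.inr a ∈ U then
        msign {Sum.inr a} (U.erase (Sum.inr a)) * g (U.erase (Sum.inr a))
      else 0 := by
  unfold emul
  by_cases h : Sum.inr a ∈ U
  · rw [Finset.sum_eq_single ({Sum.inr a} : Finset (Gen n))]
    · simp [xi, emon, h, Finset.sdiff_singleton_eq_erase]
    · intro S _ hS
      have : xi a S = 0 := by simp [xi, emon, hS]
      simp [this]
    · intro hmem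
      exact absurd (Finset.mem_powerset.mpr (Finset.singleton_subset_iff.mpr h)) hmem
  · rw [if_neg h]
    apply Finset.sum_eq_zero
    intro S hS
    have hSne : S ≠ {Sum.inr a} := by
      rintro rfl
      exact h (Finset.mem_powerset.mp hS (Finset.mem_singleton_self _))
    have : xi a S = 0 := by simp [xi, emon, hSne]
    simp [this]

lemma odot_theta_sum {α : Type*} (b : Fin n) (s : Finset α) (g : α → ExtA n) :
    odot (theta b) (∑ x ∈ s, g x) = ∑ x ∈ s, odot (theta b) (g x) := by
  funext T
  rw [Finset.sum_apply, odot_theta_apply]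
  split_ifs with h
  · exact (Finset.sum_eq_zero fun x _ => by rw [odot_theta_apply, if_pos h]).symm
  · rw [Finset.sum_apply, Finset.mul_sum]
    exact Finset.sum_congr rfl fun x _ => by rw [odot_theta_apply, if_neg h]

lemma emul_xi_sum {α : Type*} (a : Fin n) (s : Finset α) (g : α → ExtA n) :
    emul (xi a) (∑ x ∈ s, g x) = ∑ x ∈ s, emul (xi a) (g x) := by
  funext U
  rw [Finset.sum_apply, emul_xi_apply]
  split_ifs with h
  · rw [Finset.sum_apply, Finset.mul_sum]
    exact Finset.sum_congr rfl fun x _ => by rw [emul_xi_apply, if_pos h]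
  · exact (Finset.sum_eq_zero fun x _ => by rw [emul_xi_apply, if_neg h]).symm

lemma odot_theta_neg (b : Fin n) (g : ExtA n) :
    odot (theta b) (-g) = -(odot (theta b) g) := by
  funext T
  rw [Pi.neg_apply, odot_theta_apply, odot_theta_apply]
  split_ifs with h
  · rw [neg_zero]
  · rw [Pi.neg_apply, mul_neg]

lemma emul_xi_neg (a : Fin n) (g : ExtA n) :
    emul (xi a) (-g) = -(emul (xi a) g) := by
  funext U
  rw [Pi.neg_apply, emul_xi_apply, emul_xi_apply]
  split_ifs with h
  · rw [Pi.neg_apply, mul_neg]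
  · rw [neg_zero]

lemma odot_theta_swap (b d : Fin n) (g : ExtA n) :
    odot (theta b) (odot (theta d) g) = -(odot (theta d) (odot (theta b) g)) := by
  funext T
  rw [Pi.neg_apply, odot_theta_apply b (odot (theta d) g) T,
    odot_theta_apply d (odot (theta b) g) T]
  by_cases hb : Sum.inl b ∈ T
  · by_cases hd : Sum.inl d ∈ T
    · rw [if_pos hb, if_pos hd, neg_zero]
    · rw [if_pos hb, if_neg hd, odot_theta_apply,
        if_pos (Finset.mem_insert_of_mem hb), mul_zero, neg_zero]
  · by_cases hd : Sum.inl d ∈ T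
    · rw [if_neg hb, if_pos hd, odot_theta_apply,
        if_pos (Finset.mem_insert_of_mem hd), mul_zero, neg_zero]
    · rw [if_neg hb, if_neg hd, odot_theta_apply, odot_theta_apply]
      by_cases hbd : b = d
      · subst hbd
        rw [if_pos (Finset.mem_insert_self _ _)]
        ring
      · have h1 : Sum.inl d ∉ insert (Sum.inl b) T := by
          simp only [Finset.mem_insert]
          push_neg
          exact ⟨fun h => hbd (Sum.inl.inj h).symm, hd⟩
        have h2 : Sum.inl b ∉ insert (Sum.inl d) T := by
          simp only [Finset.mem_insert]
          push_neg
          exact ⟨fun h => hbd (Sum.inl.inj h), hb⟩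
        rw [if_neg h1, if_neg h2,
          msign_singleton_insert (Sum.inl d) (Sum.inl b) T hb,
          msign_singleton_insert (Sum.inl b) (Sum.inl d) T hd,
          Finset.insert_comm]
        have hgidx : gidx (Sum.inl b : Gen n) ≠ gidx (Sum.inl d) := by
          intro h; exact hbd (Sum.inl.inj (gidx_inj h))
        rcases lt_or_gt_of_ne hgidx with h | h
        · rw [if_pos h, if_neg (lt_asymm h)]; ring
        · rw [if_neg (lt_asymm h), if_pos h]; ring

lemma emul_xi_swap (a c : Fin n) (g : ExtA n) :
    emul (xi a) (emul (xi c) g) = -(emul (xi c) (emul (xi a) g)) := by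
  funext U
  rw [Pi.neg_apply, emul_xi_apply a (emul (xi c) g) U,
    emul_xi_apply c (emul (xi a) g) U]
  by_cases ha : Sum.inr a ∈ U
  · by_cases hc : Sum.inr c ∈ U
    · rw [if_pos ha, if_pos hc, emul_xi_apply, emul_xi_apply]
      by_cases hac : a = c
      · subst hac
        rw [if_neg (Finset.notMem_erase _ _)]
        ring
      · have h1 : Sum.inr c ∈ U.erase (Sum.inr a) :=
          Finset.mem_erase.mpr ⟨fun h => hac (Sum.inr.inj h).symm, hc⟩
        have h2 : Sum.inr a ∈ U.erase (Sum.inr c) :=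
          Finset.mem_erase.mpr ⟨fun h => hac (Sum.inr.inj h), ha⟩
        rw [if_pos h1, if_pos h2]
        have e1 : U.erase (Sum.inr a) =
            insert (Sum.inr c) ((U.erase (Sum.inr a)).erase (Sum.inr c)) :=
          (Finset.insert_erase h1).symm
        have e2 : U.erase (Sum.inr c) =
            insert (Sum.inr a) ((U.erase (Sum.inr c)).erase (Sum.inr a)) :=
          (Finset.insert_erase h2).symm
        have ecomm : (U.erase (Sum.inr a)).erase (Sum.inr c)
            = (U.erase (Sum.inr c)).erase (Sum.inr a) := Finset.erase_right_comm
        rw [e1, e2, msign_singleton_insert _ _ _ (Finset.notMem_erase _ _),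
          msign_singleton_insert _ _ _ (Finset.notMem_erase _ _),
          Finset.erase_insert (Finset.notMem_erase _ _),
          Finset.erase_insert (Finset.notMem_erase _ _), ecomm]
        have hgidx : gidx (Sum.inr a : Gen n) ≠ gidx (Sum.inr c) := by
          intro h; exact hac (Sum.inr.inj (gidx_inj h))
        rcases lt_or_gt_of_ne hgidx with h | h
        · rw [if_neg (lt_asymm h), if_pos h]; ring
        · rw [if_pos h, if_neg (lt_asymm h)]; ring
    · rw [if_pos ha, if_neg hc, emul_xi_apply,
        if_neg (fun h => hc (Finset.mem_of_mem_erase h)), mul_zero, neg_zero]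
  · by_cases hc : Sum.inr c ∈ U
    · rw [if_neg ha, if_pos hc, emul_xi_apply,
        if_neg (fun h => ha (Finset.mem_of_mem_erase h)), mul_zero, neg_zero]
    · rw [if_neg ha, if_neg hc, neg_zero]

lemma gidx_inl_lt_inr (b a : Fin n) : gidx (Sum.inl b : Gen n) < gidx (Sum.inr a : Gen n) := by
  show (b : ℕ) < n + (a : ℕ)
  exact lt_of_lt_of_le b.isLt (Nat.le_add_right n ↑a)

lemma odot_theta_emul_xi (b a : Fin n) (g : ExtA n) :
    odot (theta b) (emul (xi a) g) = -(emul (xi a) (odot (theta b) g)) := by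
  funext T
  rw [Pi.neg_apply, odot_theta_apply b (emul (xi a) g) T,
    emul_xi_apply a (odot (theta b) g) T]
  by_cases hb : Sum.inl b ∈ T
  · by_cases ha : Sum.inr a ∈ T
    · rw [if_pos hb, if_pos ha, odot_theta_apply,
        if_pos (Finset.mem_erase.mpr ⟨by simp, hb⟩), mul_zero, neg_zero]
    · rw [if_pos hb, if_neg ha, neg_zero]
  · by_cases ha : Sum.inr a ∈ T
    · rw [if_neg hb, if_pos ha, emul_xi_apply, odot_theta_apply]
      have hain : Sum.inr a ∈ insert (Sum.inl b) T := Finset.mem_insert_of_mem ha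
      have hbe : Sum.inl b ∉ T.erase (Sum.inr a) :=
        fun h => hb (Finset.mem_of_mem_erase h)
      rw [if_pos hain, if_neg hbe]
      have hset : (insert (Sum.inl b) T).erase (Sum.inr a)
          = insert (Sum.inl b) (T.erase (Sum.inr a)) :=
        Finset.erase_insert_of_ne (by simp)
      rw [hset, msign_singleton_insert (Sum.inr a) (Sum.inl b) (T.erase (Sum.inr a)) hbe]
      have hmb : msign {Sum.inl b} T = msign {Sum.inl b} (T.erase (Sum.inr a)) := by
        conv_lhs => rw [← Finset.insert_erase ha]
        rw [msign_singleton_insert _ _ _ (Finset.notMem_erase _ _),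
          if_neg (lt_asymm (gidx_inl_lt_inr b a)), one_mul]
      rw [hmb, if_pos (gidx_inl_lt_inr b a)]
      ring
    · rw [if_neg hb, if_neg ha, emul_xi_apply,
        if_neg (by simp [ha]), mul_zero, neg_zero]

/-- The elementary operator `L a b f = ξ_a · (θ_b ⊙ f)`. -/
noncomputable def Lop (a b : Fin n) (f : ExtA n) : ExtA n :=
  emul (xi a) (odot (theta b) f)

lemma Lop_canon (a b c d : Fin n) (f : ExtA n) :
    Lop a b (Lop c d f)
      = -(emul (xi a) (emul (xi c) (odot (theta b) (odot (theta d) f)))) := by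
  unfold Lop
  rw [odot_theta_emul_xi, emul_xi_neg]

lemma Lop_R1 (a b c d : Fin n) (f : ExtA n) :
    Lop a b (Lop c d f) = Lop c d (Lop a b f) := by
  rw [Lop_canon, Lop_canon, odot_theta_swap d b f, emul_xi_neg, emul_xi_neg,
    emul_xi_swap c a, neg_neg]

lemma Lop_R2 (a b c d : Fin n) (f : ExtA n) :
    Lop a b (Lop c d f) = -(Lop a d (Lop c b f)) := by
  rw [Lop_canon, Lop_canon, odot_theta_swap d b f, emul_xi_neg, emul_xi_neg, neg_neg]

lemma Lop_R3 (a b c d : Fin n) (f : ExtA n) :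
    Lop a b (Lop c d f) = -(Lop c b (Lop a d f)) := by
  rw [Lop_R1 c b a d, Lop_R2 a d c b, neg_neg, Lop_R1]

lemma Lop_sum {α : Type*} (a b : Fin n) (s : Finset α) (g : α → ExtA n) :
    Lop a b (∑ x ∈ s, g x) = ∑ x ∈ s, Lop a b (g x) := by
  unfold Lop
  rw [odot_theta_sum, emul_xi_sum]

/-- Sum of `G a b` over ordered pairs of distinct elements of `X`. -/
noncomputable def SS (X : Finset (Fin n)) (G : Fin n → Fin n → ExtA n) : ExtA n :=
  ∑ a ∈ X, ∑ b ∈ X.erase a, G a b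

lemma psi_eq (X : Finset (Fin n)) (f : ExtA n) :
    psi X f = SS X (fun a b => Lop a b f) := by
  unfold psi rho SS Lop
  split_ifs with h
  · rfl
  · symm
    apply Finset.sum_eq_zero
    intro a ha
    have : X.erase a = ∅ := by
      rw [← Finset.card_eq_zero, Finset.card_erase_of_mem ha]
      omega
    rw [this, Finset.sum_empty]

lemma SS_add (X : Finset (Fin n)) (G H : Fin n → Fin n → ExtA n) :
    SS X (fun a b => G a b + H a b) = SS X G + SS X H := by
  unfold SS
  rw [← Finset.sum_add_distrib]
  exact Finset.sum_congr rfl fun a _ => by rw [← Finset.sum_add_distrib]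

lemma SS_insert (x : Fin n) (X : Finset (Fin n)) (hx : x ∉ X)
    (G : Fin n → Fin n → ExtA n) :
    SS (insert x X) G = SS X G + (∑ b ∈ X, G x b) + (∑ a ∈ X, G a x) := by
  unfold SS
  rw [Finset.sum_insert hx, Finset.erase_insert hx]
  have h2 : ∀ a ∈ X, ∑ b ∈ (insert x X).erase a, G a b
      = G a x + ∑ b ∈ X.erase a, G a b := by
    intro a ha
    rw [Finset.erase_insert_of_ne (fun h : x = a => hx (h ▸ ha)), Finset.sum_insert
      (fun h => hx (Finset.mem_of_mem_erase h))]
  rw [Finset.sum_congr rfl h2, Finset.sum_add_distrib]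
  abel

lemma SS_union (X Y : Finset (Fin n)) (hXY : Disjoint X Y)
    (G : Fin n → Fin n → ExtA n) :
    SS (X ∪ Y) G = SS X G + SS Y G
      + (∑ a ∈ X, ∑ b ∈ Y, G a b) + (∑ a ∈ X, ∑ b ∈ Y, G b a) := by
  unfold SS
  rw [Finset.sum_union hXY]
  have h1 : ∀ a ∈ X, ∑ b ∈ (X ∪ Y).erase a, G a b
      = (∑ b ∈ X.erase a, G a b) + ∑ b ∈ Y, G a b := by
    intro a ha
    rw [Finset.erase_union_distrib,
      Finset.erase_eq_of_notMem (Finset.disjoint_left.mp hXY ha),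
      Finset.sum_union (Finset.disjoint_of_subset_left (Finset.erase_subset _ _) hXY)]
  have h2 : ∀ a ∈ Y, ∑ b ∈ (X ∪ Y).erase a, G a b
      = (∑ b ∈ X, G a b) + ∑ b ∈ Y.erase a, G a b := by
    intro a ha
    rw [Finset.erase_union_distrib,
      Finset.erase_eq_of_notMem (Finset.disjoint_right.mp hXY ha),
      Finset.sum_union (Finset.disjoint_of_subset_right (Finset.erase_subset _ _) hXY)]
  rw [Finset.sum_congr rfl h1, Finset.sum_congr rfl h2,
    Finset.sum_add_distrib, Finset.sum_add_distrib,
    Finset.sum_comm (s := Y) (t := X) (f := fun a b => G a b)]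
  abel

lemma SS_pair (x y : Fin n) (hxy : x ≠ y) (G : Fin n → Fin n → ExtA n) :
    SS {x, y} G = G x y + G y x := by
  have : ({x, y} : Finset (Fin n)) = insert x {y} := rfl
  rw [this, SS_insert x {y} (by simp [hxy]) G]
  have h0 : SS {y} G = 0 := by
    unfold SS
    simp [Finset.erase_singleton]
  rw [h0, Finset.sum_singleton, Finset.sum_singleton, zero_add]

lemma SS_add3 (X : Finset (Fin n)) (P Q R : Fin n → Fin n → ExtA n) :
    SS X (fun a b => P a b + Q a b + R a b) = SS X P + SS X Q + SS X R := by
  unfold SS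
  simp only [Finset.sum_add_distrib]

lemma SS_expand3 (x : Fin n) (X : Finset (Fin n)) (hx : x ∉ X)
    (P Q R : Fin n → Fin n → ExtA n) :
    SS (insert x X) (fun a b => P a b + Q a b + R a b)
      = (SS X P + (∑ b ∈ X, P x b) + (∑ a ∈ X, P a x))
      + (SS X Q + (∑ b ∈ X, Q x b) + (∑ a ∈ X, Q a x))
      + (SS X R + (∑ b ∈ X, R x b) + (∑ a ∈ X, R a x)) := by
  rw [SS_insert x X hx, SS_add3]
  simp only [Finset.sum_add_distrib]
  abel

lemma SS_expand2U (X Y : Finset (Fin n)) (h : Disjoint X Y)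
    (P Q : Fin n → Fin n → ExtA n) :
    SS (X ∪ Y) (fun a b => P a b + Q a b)
      = (SS X P + SS Y P + (∑ a ∈ X, ∑ b ∈ Y, P a b) + (∑ a ∈ X, ∑ b ∈ Y, P b a))
      + (SS X Q + SS Y Q + (∑ a ∈ X, ∑ b ∈ Y, Q a b) + (∑ a ∈ X, ∑ b ∈ Y, Q b a)) := by
  rw [SS_union X Y h, SS_add, SS_add]
  simp only [Finset.sum_add_distrib]
  abel

lemma Lop_SS (a b : Fin n) (Y : Finset (Fin n)) (H : Fin n → Fin n → ExtA n) :
    Lop a b (SS Y H) = SS Y (fun c d => Lop a b (H c d)) := by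
  unfold SS
  rw [Lop_sum]
  exact Finset.sum_congr rfl fun c _ => Lop_sum a b _ _

lemma psi_psi (X Y : Finset (Fin n)) (f : ExtA n) :
    psi X (psi Y f)
      = SS X (fun a b => SS Y (fun c d => Lop a b (Lop c d f))) := by
  rw [psi_eq Y, psi_eq X]
  unfold SS
  simp only [Lop_sum]

/-- The skein operator identity: for pairwise disjoint `A, B, {i}, {i+1} ⊆ [n]`,
`ψ_{A∪{i+1}}∘ψ_{B∪{i}} + ψ_{A∪{i}}∘ψ_{B∪{i+1}} + ψ_{A∪B}∘ψ_{{i,i+1}}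
  − ψ_A∘ψ_{B∪{i,i+1}} − ψ_{A∪{i,i+1}}∘ψ_B = 0`. -/
theorem psi_skein (n : ℕ) (A B : Finset (Fin n)) (i j : Fin n)
    (hij : (i : ℕ) + 1 = (j : ℕ)) (hAB : Disjoint A B)
    (hiA : i ∉ A) (hiB : i ∉ B) (hjA : j ∉ A) (hjB : j ∉ B) (f : ExtA n) :
    psi (insert j A) (psi (insert i B) f) + psi (insert i A) (psi (insert j B) f)
      + psi (A ∪ B) (psi {i, j} f)
      - psi A (psi (insert i (insert j B)) f)
      - psi (insert i (insert j A)) (psi B f) = 0 := by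
  have hne : i ≠ j := fun h => by rw [h] at hij; omega
  have hiJB : i ∉ insert j B := by simp [hne, hiB]
  have hiJA : i ∉ insert j A := by simp [hne, hiA]
  have e1 : psi (insert j A) (psi (insert i B) f)
      = (SS A (fun a b => SS B (fun c d => Lop a b (Lop c d f)))
          + (∑ b ∈ A, SS B (fun c d => Lop j b (Lop c d f)))
          + (∑ a ∈ A, SS B (fun c d => Lop a j (Lop c d f))))
        + (SS A (fun a b => ∑ d ∈ B, Lop a b (Lop i d f))
          + (∑ b ∈ A, ∑ d ∈ B, Lop j b (Lop i d f))
          + (∑ a ∈ A, ∑ d ∈ B, Lop a j (Lop i d f)))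
        + (SS A (fun a b => ∑ c ∈ B, Lop a b (Lop c i f))
          + (∑ b ∈ A, ∑ c ∈ B, Lop j b (Lop c i f))
          + (∑ a ∈ A, ∑ c ∈ B, Lop a j (Lop c i f))) := by
    rw [psi_psi]
    have h1 : (fun (a b : Fin n) => SS (insert i B) (fun c d => Lop a b (Lop c d f)))
        = fun a b => SS B (fun c d => Lop a b (Lop c d f))
            + (∑ d ∈ B, Lop a b (Lop i d f)) + (∑ c ∈ B, Lop a b (Lop c i f)) := by
      funext a b
      exact SS_insert i B hiB _
    rw [h1]
    exact SS_expand3 j A hjA _ _ _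
  have e2 : psi (insert i A) (psi (insert j B) f)
      = (SS A (fun a b => SS B (fun c d => Lop a b (Lop c d f)))
          + (∑ b ∈ A, SS B (fun c d => Lop i b (Lop c d f)))
          + (∑ a ∈ A, SS B (fun c d => Lop a i (Lop c d f))))
        + (SS A (fun a b => ∑ d ∈ B, Lop a b (Lop j d f))
          + (∑ b ∈ A, ∑ d ∈ B, Lop i b (Lop j d f))
          + (∑ a ∈ A, ∑ d ∈ B, Lop a i (Lop j d f)))
        + (SS A (fun a b => ∑ c ∈ B, Lop a b (Lop c j f))
          + (∑ b ∈ A, ∑ c ∈ B, Lop i b (Lop c j f))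
          + (∑ a ∈ A, ∑ c ∈ B, Lop a i (Lop c j f))) := by
    rw [psi_psi]
    have h1 : (fun (a b : Fin n) => SS (insert j B) (fun c d => Lop a b (Lop c d f)))
        = fun a b => SS B (fun c d => Lop a b (Lop c d f))
            + (∑ d ∈ B, Lop a b (Lop j d f)) + (∑ c ∈ B, Lop a b (Lop c j f)) := by
      funext a b
      exact SS_insert j B hjB _
    rw [h1]
    exact SS_expand3 i A hiA _ _ _
  have e3 : psi (A ∪ B) (psi {i, j} f)
      = (SS A (fun a b => Lop a b (Lop i j f))
          + SS B (fun a b => Lop a b (Lop i j f))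
          + (∑ a ∈ A, ∑ b ∈ B, Lop a b (Lop i j f))
          + (∑ a ∈ A, ∑ b ∈ B, Lop b a (Lop i j f)))
        + (SS A (fun a b => Lop a b (Lop j i f))
          + SS B (fun a b => Lop a b (Lop j i f))
          + (∑ a ∈ A, ∑ b ∈ B, Lop a b (Lop j i f))
          + (∑ a ∈ A, ∑ b ∈ B, Lop b a (Lop j i f))) := by
    rw [psi_psi]
    have h1 : (fun (a b : Fin n) => SS {i, j} (fun c d => Lop a b (Lop c d f)))
        = fun a b => Lop a b (Lop i j f) + Lop a b (Lop j i f) := by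
      funext a b
      exact SS_pair i j hne _
    rw [h1]
    exact SS_expand2U A B hAB _ _
  have e4 : psi A (psi (insert i (insert j B)) f)
      = SS A (fun a b => SS B (fun c d => Lop a b (Lop c d f)))
        + SS A (fun a b => ∑ d ∈ B, Lop a b (Lop j d f))
        + SS A (fun a b => ∑ c ∈ B, Lop a b (Lop c j f))
        + (SS A (fun a b => Lop a b (Lop i j f))
          + SS A (fun a b => ∑ d ∈ B, Lop a b (Lop i d f)))
        + (SS A (fun a b => Lop a b (Lop j i f))
          + SS A (fun a b => ∑ c ∈ B, Lop a b (Lop c i f))) := by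
    rw [psi_psi]
    have h1 : (fun (a b : Fin n) => SS (insert i (insert j B)) (fun c d => Lop a b (Lop c d f)))
        = fun a b =>
          (SS B (fun c d => Lop a b (Lop c d f))
            + (∑ d ∈ B, Lop a b (Lop j d f)) + (∑ c ∈ B, Lop a b (Lop c j f)))
          + (Lop a b (Lop i j f) + ∑ d ∈ B, Lop a b (Lop i d f))
          + (Lop a b (Lop j i f) + ∑ c ∈ B, Lop a b (Lop c i f)) := by
      funext a b
      rw [SS_insert i (insert j B) hiJB, SS_insert j B hjB,
        Finset.sum_insert hjB, Finset.sum_insert hjB]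
    rw [h1, SS_add3, SS_add3, SS_add, SS_add]
  have e5 : psi (insert i (insert j A)) (psi B f)
      = SS A (fun a b => SS B (fun c d => Lop a b (Lop c d f)))
        + (∑ b ∈ A, SS B (fun c d => Lop j b (Lop c d f)))
        + (∑ a ∈ A, SS B (fun c d => Lop a j (Lop c d f)))
        + (SS B (fun c d => Lop i j (Lop c d f))
          + ∑ b ∈ A, SS B (fun c d => Lop i b (Lop c d f)))
        + (SS B (fun c d => Lop j i (Lop c d f))
          + ∑ a ∈ A, SS B (fun c d => Lop a i (Lop c d f))) := by
    rw [psi_psi, SS_insert i (insert j A) hiJA, SS_insert j A hjA,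
      Finset.sum_insert hjA, Finset.sum_insert hjA]
  have hr1 : (∑ b ∈ A, ∑ d ∈ B, Lop j b (Lop i d f))
      = -(∑ b ∈ A, ∑ d ∈ B, Lop i b (Lop j d f)) := by
    rw [← Finset.sum_neg_distrib]
    refine Finset.sum_congr rfl fun p _ => ?_
    rw [← Finset.sum_neg_distrib]
    exact Finset.sum_congr rfl fun q _ => Lop_R3 j p i q f
  have hr2 : (∑ b ∈ A, ∑ c ∈ B, Lop j b (Lop c i f))
      = -(∑ a ∈ A, ∑ b ∈ B, Lop b a (Lop j i f)) := by
    rw [← Finset.sum_neg_distrib]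
    refine Finset.sum_congr rfl fun p _ => ?_
    rw [← Finset.sum_neg_distrib]
    exact Finset.sum_congr rfl fun q _ => Lop_R3 j p q i f
  have hr3 : (∑ a ∈ A, ∑ d ∈ B, Lop a j (Lop i d f))
      = -(∑ a ∈ A, ∑ b ∈ B, Lop a b (Lop i j f)) := by
    rw [← Finset.sum_neg_distrib]
    refine Finset.sum_congr rfl fun p _ => ?_
    rw [← Finset.sum_neg_distrib]
    exact Finset.sum_congr rfl fun q _ => Lop_R2 p j i q f
  have hr4 : (∑ a ∈ A, ∑ c ∈ B, Lop a j (Lop c i f))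
      = -(∑ a ∈ A, ∑ c ∈ B, Lop a i (Lop c j f)) := by
    rw [← Finset.sum_neg_distrib]
    refine Finset.sum_congr rfl fun p _ => ?_
    rw [← Finset.sum_neg_distrib]
    exact Finset.sum_congr rfl fun q _ => Lop_R2 p j q i f
  have hr5 : (∑ b ∈ A, ∑ c ∈ B, Lop i b (Lop c j f))
      = -(∑ a ∈ A, ∑ b ∈ B, Lop b a (Lop i j f)) := by
    rw [← Finset.sum_neg_distrib]
    refine Finset.sum_congr rfl fun p _ => ?_
    rw [← Finset.sum_neg_distrib]
    exact Finset.sum_congr rfl fun q _ => Lop_R3 i p q j f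
  have hr6 : (∑ a ∈ A, ∑ d ∈ B, Lop a i (Lop j d f))
      = -(∑ a ∈ A, ∑ b ∈ B, Lop a b (Lop j i f)) := by
    rw [← Finset.sum_neg_distrib]
    refine Finset.sum_congr rfl fun p _ => ?_
    rw [← Finset.sum_neg_distrib]
    exact Finset.sum_congr rfl fun q _ => Lop_R2 p i j q f
  have hr7 : SS B (fun a b => Lop a b (Lop i j f))
      = SS B (fun c d => Lop i j (Lop c d f)) := by
    unfold SS
    exact Finset.sum_congr rfl fun a _ => Finset.sum_congr rfl fun b _ => Lop_R1 a b i j f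
  have hr8 : SS B (fun a b => Lop a b (Lop j i f))
      = SS B (fun c d => Lop j i (Lop c d f)) := by
    unfold SS
    exact Finset.sum_congr rfl fun a _ => Finset.sum_congr rfl fun b _ => Lop_R1 a b j i f
  rw [e1, e2, e3, e4, e5, hr1, hr2, hr3, hr4, hr5, hr6, hr7, hr8]
  abel
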